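/- Let $\lambda$ be a Young diagram (a finite down-closed subset of $\mathbb{N}^2$) with $n$ boxes, let $\alpha_0,\dots,\alpha_m$ denote the minimal generators of the corresponding monomial ideal listed from bottom to top, and for each $i < m$ let $p_i$ be the difference in $y$-coordinate between $\alpha_{i+1}$ and $\alpha_i$. For each $i$ let $P_{\alpha_i}$ be the set of boxes $\beta \in \lambda$ lying strictly to the left of $\alpha_i$ (smaller $x$-coordinate) such that shifting $\beta$ upward by $p_i$ in the $y$-direction leaves $\lambda$. Then $\sum_i |P_{\alpha_i}| = n$. -/
import Mathlib

lemma downclosed_mem_iff (S : Finset ℕ) (h : ∀ x ∈ S, ∀ y, y ≤ x → y ∈ S) :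
    ∀ x, x ∈ S ↔ x < S.card := by
  intro x
  constructor
  · intro hx
    have hsub : Finset.Iic x ⊆ S := fun y hy => h x hx y (Finset.mem_Iic.mp hy)
    have := Finset.card_le_card hsub
    rw [Nat.card_Iic] at this
    omega
  · intro hx
    by_contra hxS
    have hsub : S ⊆ Finset.Iio x := by
      intro y hy
      rw [Finset.mem_Iio]
      by_contra hge
      exact hxS (h y hy x (le_of_not_gt hge))
    have := Finset.card_le_card hsub
    rw [Nat.card_Iio] at this
    omega

/-- Counting arrows of the first kind. -/
theorem sum_P_eq_n (n m : ℕ) (lam : Finset (ℕ × ℕ))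
    (hdc : ∀ p ∈ lam, ∀ q : ℕ × ℕ, q.1 ≤ p.1 → q.2 ≤ p.2 → q ∈ lam)
    (hcard : lam.card = n)
    (α : Fin (m + 1) → ℕ × ℕ)
    (hmono : StrictMono fun i => (α i).2)
    (hmin : ∀ p : ℕ × ℕ,
      (p ∉ lam ∧ ∀ q : ℕ × ℕ, q ≤ p → q ≠ p → q ∈ lam) ↔ ∃ i, α i = p) :
    ∑ i : Fin m,
      (lam.filter fun β => β.1 < (α i.castSucc).1 ∧
        (β.1, β.2 + ((α i.succ).2 - (α i.castSucc).2)) ∉ lam).card = n := by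
  subst hcard
  have hαnot : ∀ i, α i ∉ lam := fun i => ((hmin (α i)).mpr ⟨i, rfl⟩).1
  have hbmono : ∀ {i j : Fin (m+1)}, i ≤ j → (α i).2 ≤ (α j).2 := by
    intro i j hij
    exact (hmono.monotone hij : _)
  have hanti : ∀ i j : Fin (m+1), i < j → (α j).1 < (α i).1 := by
    intro i j hij
    by_contra h
    push_neg at h
    have hle : α i ≤ α j := Prod.le_def.mpr ⟨h, le_of_lt (hmono hij)⟩
    have hne : α i ≠ α j := by
      intro he
      have h2 : (α i).2 < (α j).2 := hmono hij
      rw [he] at h2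
      exact lt_irrefl _ h2
    exact hαnot i (((hmin (α j)).mpr ⟨j, rfl⟩).2 (α i) hle hne)
  -- every point outside lam dominates a generator
  have hbelow : ∀ q : ℕ × ℕ, q ∉ lam → ∃ j, α j ≤ q := by
    have key : ∀ k, ∀ q : ℕ × ℕ, q.1 + q.2 ≤ k → q ∉ lam → ∃ j, α j ≤ q := by
      intro k
      induction k with
      | zero =>
        intro q hk hq
        have hminq : ∀ q' : ℕ × ℕ, q' ≤ q → q' ≠ q → q' ∈ lam := by
          intro q' hle hne
          exfalso
          rw [Prod.le_def] at hle
          exact hne (Prod.ext (by omega) (by omega))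
        obtain ⟨j, hj⟩ := (hmin q).mp ⟨hq, hminq⟩
        exact ⟨j, le_of_eq hj⟩
      | succ k ih =>
        intro q hk hq
        by_cases hm : ∀ q' : ℕ × ℕ, q' ≤ q → q' ≠ q → q' ∈ lam
        · obtain ⟨j, hj⟩ := (hmin q).mp ⟨hq, hm⟩
          exact ⟨j, le_of_eq hj⟩
        · push_neg at hm
          obtain ⟨q', hle, hne, hq'⟩ := hm
          have hlec := Prod.le_def.mp hle
          have hnec : q'.1 ≠ q.1 ∨ q'.2 ≠ q.2 := by
            by_contra hc
            push_neg at hc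
            exact hne (Prod.ext hc.1 hc.2)
          have hk' : q'.1 + q'.2 ≤ k := by omega
          obtain ⟨j, hj⟩ := ih q' hk' hq'
          exact ⟨j, hj.trans hle⟩
    exact fun q hq => key (q.1 + q.2) q le_rfl hq
  -- filling lemma
  have hfill : ∀ (i : Fin m) (c r : ℕ), c < (α i.castSucc).1 → r < (α i.succ).2 →
      (c, r) ∈ lam := by
    intro i c r hc hr
    by_contra h
    obtain ⟨k, hk⟩ := hbelow (c, r) h
    rw [Prod.le_def] at hk
    have hik : i.castSucc < k := by
      by_contra hkc
      push_neg at hkc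
      rcases lt_or_eq_of_le hkc with hlt | heq
      · have := hanti k i.castSucc hlt
        omega
      · rw [heq] at hk; omega
    have hsk : i.succ ≤ k := by
      have := Fin.castSucc_lt_iff_succ_le.mp hik
      exact this
    have := hbmono hsk
    omega
  -- column heights
  set H : ℕ → ℕ := fun c => ((lam.filter fun β => β.1 = c).image Prod.snd).card with hH
  have hcol : ∀ c r : ℕ, (c, r) ∈ lam ↔ r < H c := by
    intro c r
    have hdcS : ∀ x ∈ (lam.filter fun β => β.1 = c).image Prod.snd, ∀ y, y ≤ x →
        y ∈ (lam.filter fun β => β.1 = c).image Prod.snd := by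
      intro x hx y hy
      rw [Finset.mem_image] at hx ⊢
      obtain ⟨β, hβ, hβ2⟩ := hx
      rw [Finset.mem_filter] at hβ
      refine ⟨(c, y), ?_, rfl⟩
      rw [Finset.mem_filter]
      exact ⟨hdc β hβ.1 (c, y) (le_of_eq hβ.2.symm) (show y ≤ β.2 by omega), rfl⟩
    have hmem : (c, r) ∈ lam ↔ r ∈ (lam.filter fun β => β.1 = c).image Prod.snd := by
      constructor
      · intro h
        rw [Finset.mem_image]
        exact ⟨(c, r), Finset.mem_filter.mpr ⟨h, rfl⟩, rfl⟩
      · intro h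
        rw [Finset.mem_image] at h
        obtain ⟨β, hβ, hβ2⟩ := h
        rw [Finset.mem_filter] at hβ
        have : β = (c, r) := Prod.ext hβ.2 hβ2
        rw [← this]; exact hβ.1
    rw [hmem]
    exact downclosed_mem_iff _ hdcS r
  have hHge : ∀ (i : Fin m) (c : ℕ), c < (α i.castSucc).1 → (α i.succ).2 ≤ H c := by
    intro i c hc
    by_contra h
    push_neg at h
    have := (hcol c (H c)).mp (hfill i c (H c) hc h)
    omega
  -- cardinality of P_i
  have hPcard : ∀ i : Fin m,
      (lam.filter fun β => β.1 < (α i.castSucc).1 ∧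
        (β.1, β.2 + ((α i.succ).2 - (α i.castSucc).2)) ∉ lam).card
      = (α i.castSucc).1 * ((α i.succ).2 - (α i.castSucc).2) := by
    intro i
    set A := (α i.castSucc).1 with hAdef
    set p := (α i.succ).2 - (α i.castSucc).2 with hpdef
    have hfib : ∀ β ∈ (lam.filter fun β => β.1 < A ∧ (β.1, β.2 + p) ∉ lam),
        β.1 ∈ Finset.range A := by
      intro β hβ
      rw [Finset.mem_filter] at hβ
      exact Finset.mem_range.mpr hβ.2.1
    rw [Finset.card_eq_sum_card_fiberwise hfib]
    have hcolcard : ∀ c ∈ Finset.range A,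
        ((lam.filter fun β => β.1 < A ∧ (β.1, β.2 + p) ∉ lam).filter
          fun β => β.1 = c).card = p := by
      intro c hc
      rw [Finset.mem_range] at hc
      have hHc : p ≤ H c := le_trans (Nat.sub_le _ _) (hHge i c hc)
      have heq : (lam.filter fun β => β.1 < A ∧ (β.1, β.2 + p) ∉ lam).filter
          (fun β => β.1 = c)
          = (Finset.Ico (H c - p) (H c)).image (fun r => (c, r)) := by
        ext ⟨x, y⟩
        simp only [Finset.mem_filter, Finset.mem_image, Finset.mem_Ico, Prod.mk.injEq]
        constructor
        · rintro ⟨⟨hmem', hx, hnm⟩, rfl⟩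
          have h1 := (hcol _ y).mp hmem'
          have h2 : ¬ (y + p < H _) := fun hcon => hnm ((hcol _ (y + p)).mpr hcon)
          exact ⟨y, ⟨by omega, h1⟩, rfl, rfl⟩
        · rintro ⟨r, ⟨hr1, hr2⟩, rfl, rfl⟩
          refine ⟨⟨(hcol _ r).mpr hr2, hc, fun hcon => ?_⟩, rfl⟩
          have := (hcol _ (r + p)).mp hcon
          omega
      rw [heq, Finset.card_image_of_injective _ (fun a b hab => (Prod.mk.injEq _ _ _ _).mp hab |>.2),
        Nat.card_Ico]
      omega
    rw [Finset.sum_congr rfl hcolcard, Finset.sum_const, Finset.card_range, smul_eq_mul]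
  -- cardinality of slabs S_i
  have hScard : ∀ i : Fin m,
      (lam.filter fun β => (α i.castSucc).2 ≤ β.2 ∧ β.2 < (α i.succ).2).card
      = (α i.castSucc).1 * ((α i.succ).2 - (α i.castSucc).2) := by
    intro i
    have heq : (lam.filter fun β => (α i.castSucc).2 ≤ β.2 ∧ β.2 < (α i.succ).2)
        = (Finset.range (α i.castSucc).1) ×ˢ
          (Finset.Ico (α i.castSucc).2 (α i.succ).2) := by
      ext ⟨x, y⟩
      simp only [Finset.mem_filter, Finset.mem_product, Finset.mem_range, Finset.mem_Ico]
      constructor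
      · rintro ⟨hmem', hy1, hy2⟩
        refine ⟨?_, hy1, hy2⟩
        by_contra hx
        push_neg at hx
        exact hαnot i.castSucc (hdc (x, y) hmem' (α i.castSucc) hx hy1)
      · rintro ⟨hx, hy1, hy2⟩
        exact ⟨hfill i x y hx hy2, hy1, hy2⟩
    rw [heq, Finset.card_product, Finset.card_range, Nat.card_Ico]
  -- B 0 = 0
  have hB0 : (α 0).2 = 0 := by
    have hx : ((lam.sup Prod.fst) + 1, 0) ∉ lam := by
      intro hcon
      have h2 : lam.sup Prod.fst + 1 ≤ lam.sup Prod.fst := Finset.le_sup (f := Prod.fst) hcon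
      omega
    obtain ⟨j, hj⟩ := hbelow _ hx
    rw [Prod.le_def] at hj
    have hj0 : j = 0 := by
      by_contra hne
      have hlt : (0 : Fin (m+1)) < j := lt_of_le_of_ne (Fin.zero_le j) (Ne.symm hne)
      have h2 : (α 0).2 < (α j).2 := hmono hlt
      omega
    rw [hj0] at hj
    omega
  -- A last = 0
  have hAlast : (α (Fin.last m)).1 = 0 := by
    have hy : (0, (lam.sup Prod.snd) + 1) ∉ lam := by
      intro hcon
      have h2 : lam.sup Prod.snd + 1 ≤ lam.sup Prod.snd := Finset.le_sup (f := Prod.snd) hcon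
      omega
    obtain ⟨j, hj⟩ := hbelow _ hy
    rw [Prod.le_def] at hj
    have hjl : j = Fin.last m := by
      by_contra hne
      have hlt : j < Fin.last m := lt_of_le_of_ne (Fin.le_last j) hne
      have h2 := hanti j (Fin.last m) hlt
      omega
    rw [hjl] at hj
    omega
  -- every box lies in exactly one slab
  have hone : ∀ β ∈ lam,
      (Finset.univ.filter fun i : Fin m =>
        (α i.castSucc).2 ≤ β.2 ∧ β.2 < (α i.succ).2).card = 1 := by
    intro β hβ
    have hlt : β.2 < (α (Fin.last m)).2 := by
      by_contra h
      push_neg at h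
      refine hαnot (Fin.last m) (hdc β hβ _ ?_ h)
      rw [hAlast]; omega
    have hge0 : (α 0).2 ≤ β.2 := by omega
    -- existence via max
    have hT : (Finset.univ.filter fun j : Fin (m+1) => (α j).2 ≤ β.2).Nonempty :=
      ⟨0, by simp [hge0]⟩
    set j0 := hT.choose with hj0def
    obtain ⟨i0, hex⟩ : ∃ i0 : Fin m, (α i0.castSucc).2 ≤ β.2 ∧ β.2 < (α i0.succ).2 := by
      set T := Finset.univ.filter fun j : Fin (m+1) => (α j).2 ≤ β.2 with hT'
      have hTne : T.Nonempty := hT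
      set j1 := T.max' hTne with hj1
      have hj1mem : j1 ∈ T := T.max'_mem hTne
      rw [hT', Finset.mem_filter] at hj1mem
      have hj1lt : (j1 : ℕ) < m := by
        by_contra h
        push_neg at h
        have : j1 = Fin.last m := by
          apply Fin.ext
          have h3 := j1.isLt
          simp only [Fin.val_last]
          omega
        rw [this] at hj1mem
        omega
      refine ⟨⟨j1, hj1lt⟩, ?_, ?_⟩
      · have : Fin.castSucc ⟨(j1 : ℕ), hj1lt⟩ = j1 := Fin.ext rfl
        rw [this]
        exact hj1mem.2
      · by_contra h
        push_neg at h
        have hmem2 : Fin.succ ⟨(j1 : ℕ), hj1lt⟩ ∈ T := by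
          rw [hT', Finset.mem_filter]
          exact ⟨Finset.mem_univ _, h⟩
        have := T.le_max' _ hmem2
        rw [← hj1] at this
        have : ((Fin.succ ⟨(j1 : ℕ), hj1lt⟩ : Fin (m+1)) : ℕ) ≤ (j1 : ℕ) := this
        simp [Fin.succ] at this
    rw [Finset.card_eq_one]
    refine ⟨i0, ?_⟩
    ext i
    simp only [Finset.mem_filter, Finset.mem_univ, true_and, Finset.mem_singleton]
    constructor
    · intro hi
      by_contra hne
      rcases lt_or_gt_of_ne hne with hlt' | hlt'
      · have hle : i.succ ≤ i0.castSucc := by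
          have h3 : (i : ℕ) < (i0 : ℕ) := hlt'
          rw [Fin.le_def]
          simp only [Fin.val_succ, Fin.coe_castSucc]
          omega
        have := hbmono hle
        omega
      · have hle : i0.succ ≤ i.castSucc := by
          have h3 : (i0 : ℕ) < (i : ℕ) := hlt'
          rw [Fin.le_def]
          simp only [Fin.val_succ, Fin.coe_castSucc]
          omega
        have := hbmono hle
        omega
    · rintro rfl
      exact hex
  -- partition: sum of slab cards = lam.card
  have hpart : ∑ i : Fin m,
      (lam.filter fun β => (α i.castSucc).2 ≤ β.2 ∧ β.2 < (α i.succ).2).card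
      = lam.card := by
    have : ∀ i : Fin m,
        (lam.filter fun β => (α i.castSucc).2 ≤ β.2 ∧ β.2 < (α i.succ).2).card
        = ∑ β ∈ lam, if (α i.castSucc).2 ≤ β.2 ∧ β.2 < (α i.succ).2 then 1 else 0 := by
      intro i
      rw [Finset.card_filter]
    rw [Finset.sum_congr rfl (fun i _ => this i), Finset.sum_comm]
    have h2 : ∀ β ∈ lam,
        ∑ i : Fin m, (if (α i.castSucc).2 ≤ β.2 ∧ β.2 < (α i.succ).2 then 1 else 0)
        = 1 := by
      intro β hβ
      rw [← Finset.card_filter]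
      exact hone β hβ
    rw [Finset.sum_congr rfl h2]
    simp
  calc ∑ i : Fin m,
      (lam.filter fun β => β.1 < (α i.castSucc).1 ∧
        (β.1, β.2 + ((α i.succ).2 - (α i.castSucc).2)) ∉ lam).card
      = ∑ i : Fin m, (α i.castSucc).1 * ((α i.succ).2 - (α i.castSucc).2) :=
        Finset.sum_congr rfl (fun i _ => hPcard i)
    _ = ∑ i : Fin m,
        (lam.filter fun β => (α i.castSucc).2 ≤ β.2 ∧ β.2 < (α i.succ).2).card :=
        Finset.sum_congr rfl (fun i _ => (hScard i).symm)
    _ = lam.card := hpart
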